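/- arXiv:2402.05199 — 2 statements merged into one kernel-verified Lean document; each statement's English description precedes it below -/
import Mathlib

section
/- The integral ∫₀^∞ (ln x)² / (√x (1+x)) dx equals π³. -/
open Real MeasureTheory Set

private lemma expNeg_deriv' : ∀ x ∈ Ioi (0:ℝ),
    HasDerivWithinAt (fun u : ℝ => Real.exp (-u)) (-Real.exp (-x)) (Ioi (0:ℝ)) x := by
  intro x _
  simpa using ((hasDerivAt_neg x).exp).hasDerivWithinAt

private lemma expNeg_injOn' : InjOn (fun u : ℝ => Real.exp (-u)) (Ioi (0:ℝ)) := by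
  intro a _ b _ h
  have := Real.exp_injective h
  linarith [neg_injective this]

private lemma expNeg_image' : (fun u : ℝ => Real.exp (-u)) '' (Ioi (0:ℝ)) = Ioo (0:ℝ) 1 := by
  ext t
  constructor
  · rintro ⟨u, hu, rfl⟩
    exact ⟨Real.exp_pos _, by rw [Real.exp_lt_one_iff]; simpa using (mem_Ioi.mp hu)⟩
  · rintro ⟨h0, h1⟩
    refine ⟨-Real.log t, ?_, by simp [Real.exp_log h0]⟩
    simpa using Real.log_neg h0 h1

private lemma ptwise_eq (a : ℝ) : ∀ x ∈ Ioi (0:ℝ),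
    |-Real.exp (-x)| • (Real.exp (-x) ^ a * Real.log (Real.exp (-x)) ^ 2)
      = x ^ (2:ℝ) * Real.exp (-(a+1) * x ^ (1:ℝ)) := by
  intro x hx
  have hx0 : (0:ℝ) < x := hx
  rw [abs_neg, abs_of_pos (Real.exp_pos _), smul_eq_mul, Real.log_exp,
    Real.rpow_def_of_pos (Real.exp_pos _), Real.log_exp, Real.rpow_one,
    Real.rpow_two, neg_sq, show -(a+1)*x = -x*a + -x by ring, Real.exp_add]
  ring

private lemma integral_exp_aux (a : ℝ) (ha : 0 ≤ a) :
    ∫ x in Ioi (0:ℝ), x ^ (2:ℝ) * Real.exp (-(a+1) * x ^ (1:ℝ)) = 2 / (a+1)^3 := by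
  rw [integral_rpow_mul_exp_neg_mul_rpow (by norm_num) (by norm_num) (by linarith)]
  have h3 : ((2:ℝ)+1)/1 = ((2:ℕ):ℝ) + 1 := by norm_num
  rw [h3, Real.Gamma_nat_eq_factorial]
  have ha1 : (0:ℝ) ≤ a + 1 := by linarith
  rw [show (-((2:ℝ)+1)/1 : ℝ) = -(((3:ℕ)):ℝ) by norm_num, Real.rpow_neg ha1,
    Real.rpow_natCast]
  norm_num
  ring

private lemma integrableOn_pow_log_sq (n : ℕ) :
    IntegrableOn (fun t : ℝ => t ^ n * Real.log t ^ 2) (Ioo (0:ℝ) 1) := by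
  have : IntegrableOn (fun t : ℝ => t ^ ((n:ℝ)) * Real.log t ^ 2) (Ioo (0:ℝ) 1) := by
    rw [← expNeg_image', integrableOn_image_iff_integrableOn_abs_deriv_smul
      measurableSet_Ioi expNeg_deriv' expNeg_injOn']
    have h := integrableOn_rpow_mul_exp_neg_mul_rpow (p := 1) (s := 2) (b := (n:ℝ)+1)
      (by norm_num) zero_lt_one (by positivity)
    exact h.congr_fun (fun x hx => (ptwise_eq (n:ℝ) x hx).symm) measurableSet_Ioi
  simpa [Real.rpow_natCast] using this

private lemma integral_pow_log_sq (n : ℕ) :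
    ∫ t in Ioo (0:ℝ) 1, t ^ n * Real.log t ^ 2 = 2 / ((n:ℝ)+1)^3 := by
  have : ∫ t in Ioo (0:ℝ) 1, t ^ ((n:ℝ)) * Real.log t ^ 2 = 2 / ((n:ℝ)+1)^3 := by
    rw [← expNeg_image', integral_image_eq_integral_abs_deriv_smul
      measurableSet_Ioi expNeg_deriv' expNeg_injOn',
      setIntegral_congr_fun measurableSet_Ioi (ptwise_eq (n:ℝ)),
      integral_exp_aux (n:ℝ) (by positivity)]
  simpa [Real.rpow_natCast] using this

private lemma hasSum_beta3' :
    HasSum (fun k : ℕ => 2 / (4*(k:ℝ)+1)^3 - 2 / (4*(k:ℝ)+3)^3) (π^3/16) := by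
  have h := hasSum_L_function_mod_four_eval_three
  replace h := (Nat.divModEquiv 4).symm.hasSum_iff.mpr h
  dsimp [Function.comp_def] at h
  have h2 : HasSum (fun k : ℕ => 1/(4*(k:ℝ)+1)^3 - 1/(4*(k:ℝ)+3)^3) (π^3/32) := by
    refine h.prod_fiberwise fun k => ?_
    convert hasSum_fintype (_ : Fin 4 → ℝ) using 1
    rw [Fin.sum_univ_four]
    have e0 : Real.sin (π * ((k*4+(0:ℕ)) : ℕ) / 2) = 0 := by
      push_cast
      rw [show π * (k*4+0)/2 = (2*k : ℤ) * π by push_cast; ring, Real.sin_int_mul_pi]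
    have e1 : Real.sin (π * ((k*4+(1:ℕ)) : ℕ) / 2) = 1 := by
      push_cast
      rw [show π * (k*4+1)/2 = π/2 + (k : ℤ) * (2*π) by push_cast; ring,
        Real.sin_add_int_mul_two_pi, Real.sin_pi_div_two]
    have e2 : Real.sin (π * ((k*4+(2:ℕ)) : ℕ) / 2) = 0 := by
      push_cast
      rw [show π * (k*4+2)/2 = (2*k+1 : ℤ) * π by push_cast; ring, Real.sin_int_mul_pi]
    have e3 : Real.sin (π * ((k*4+(3:ℕ)) : ℕ) / 2) = -1 := by
      push_cast
      rw [show π * (k*4+3)/2 = -(π/2) + (k+1 : ℤ) * (2*π) by push_cast; ring,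
        Real.sin_add_int_mul_two_pi, Real.sin_neg, Real.sin_pi_div_two]
    simp only [Nat.divModEquiv_symm_apply]
    rw [show ((0:Fin 4):ℕ) = 0 from rfl, show ((1:Fin 4):ℕ) = 1 from rfl,
      show ((2:Fin 4):ℕ) = 2 from rfl, show ((3:Fin 4):ℕ) = 3 from rfl, e0, e1, e2, e3]
    push_cast
    ring
  have := h2.mul_left 2
  have hf : (fun k : ℕ => 2 / (4*(k:ℝ)+1)^3 - 2 / (4*(k:ℝ)+3)^3)
      = fun k : ℕ => 2 * (1 / (4*(k:ℝ)+1)^3 - 1 / (4*(k:ℝ)+3)^3) := by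
    funext k; ring
  rw [hf, show (π^3/16 : ℝ) = 2 * (π^3/32) by ring]
  exact this

private lemma F_integral (k : ℕ) :
    ∫ t in Ioo (0:ℝ) 1, (t ^ (4*k) - t ^ (4*k+2)) * Real.log t ^ 2
      = 2/(4*(k:ℝ)+1)^3 - 2/(4*(k:ℝ)+3)^3 := by
  have h : ∫ t in Ioo (0:ℝ) 1, (t ^ (4*k) - t ^ (4*k+2)) * Real.log t ^ 2
      = (∫ t in Ioo (0:ℝ) 1, t ^ (4*k) * Real.log t ^ 2)
        - ∫ t in Ioo (0:ℝ) 1, t ^ (4*k+2) * Real.log t ^ 2 := by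
    rw [← integral_sub (integrableOn_pow_log_sq _) (integrableOn_pow_log_sq _)]
    congr 1; funext t; ring
  rw [h, integral_pow_log_sq, integral_pow_log_sq]
  push_cast
  ring

private lemma F_nonneg (k : ℕ) : ∀ t ∈ Ioo (0:ℝ) 1,
    0 ≤ (t ^ (4*k) - t ^ (4*k+2)) * Real.log t ^ 2 := fun t ht =>
  mul_nonneg (sub_nonneg.mpr (pow_le_pow_of_le_one ht.1.le ht.2.le (by omega))) (sq_nonneg _)

private lemma F_norm_integral (k : ℕ) :
    ∫ t in Ioo (0:ℝ) 1, ‖(t ^ (4*k) - t ^ (4*k+2)) * Real.log t ^ 2‖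
      = 2/(4*(k:ℝ)+1)^3 - 2/(4*(k:ℝ)+3)^3 := by
  rw [← F_integral k]
  exact setIntegral_congr_fun measurableSet_Ioo fun t ht => Real.norm_of_nonneg (F_nonneg k t ht)

private lemma K_val :
    ∫ t in Ioo (0:ℝ) 1, Real.log t ^ 2 / (1 + t^2) = π^3/16 := by
  have hInt : ∀ k : ℕ, Integrable (fun t : ℝ => (t ^ (4*k) - t ^ (4*k+2)) * Real.log t ^ 2)
      (volume.restrict (Ioo (0:ℝ) 1)) := by
    intro k
    have h := (integrableOn_pow_log_sq (4*k)).sub (integrableOn_pow_log_sq (4*k+2))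
    simp only [sub_mul]
    exact h
  have hsum : Summable fun k : ℕ =>
      ∫ t in Ioo (0:ℝ) 1, ‖(t ^ (4*k) - t ^ (4*k+2)) * Real.log t ^ 2‖ := by
    have := hasSum_beta3'.summable
    simpa only [F_norm_integral] using this
  have key := integral_tsum_of_summable_integral_norm hInt hsum
  have lhs : ∑' k : ℕ, ∫ t in Ioo (0:ℝ) 1, (t ^ (4*k) - t ^ (4*k+2)) * Real.log t ^ 2
      = π^3/16 := by
    simp only [F_integral]
    exact hasSum_beta3'.tsum_eq
  rw [lhs] at key
  rw [key]
  refine setIntegral_congr_fun measurableSet_Ioo fun t ht => ?_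
  have h0 : (0:ℝ) ≤ t := ht.1.le
  have h4 : t^4 < 1 := pow_lt_one₀ h0 ht.2 (by norm_num)
  have hgeo : ∑' k : ℕ, (t^4)^k = (1 - t^4)⁻¹ :=
    tsum_geometric_of_lt_one (by positivity) h4
  have hterm : ∀ k : ℕ, (t ^ (4*k) - t ^ (4*k+2)) * Real.log t ^ 2
      = (t^4)^k * ((1 - t^2) * Real.log t ^ 2) := by
    intro k
    rw [pow_add, ← pow_mul]
    ring
  rw [tsum_congr hterm, tsum_mul_right, hgeo]
  have h2 : (0:ℝ) < 1 - t^2 := by nlinarith [ht.2, ht.1]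
  have h2' : (0:ℝ) < 1 + t^2 := by positivity
  have h4' : 1 - t^4 = (1 - t^2) * (1 + t^2) := by ring
  rw [h4']
  field_simp

private lemma K_integrable :
    IntegrableOn (fun t : ℝ => Real.log t ^ 2 / (1 + t^2)) (Ioo (0:ℝ) 1) := by
  have h0 := integrableOn_pow_log_sq 0
  simp only [pow_zero, one_mul] at h0
  refine h0.mono' ?_ ?_
  · exact ((Real.measurable_log.pow_const 2).div
      (measurable_const.add (measurable_id.pow_const 2))).aestronglyMeasurable
  · refine (ae_restrict_iff' measurableSet_Ioo).mpr (Filter.Eventually.of_forall fun t ht => ?_)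
    have h1 : (1:ℝ) ≤ 1 + t^2 := by nlinarith [sq_nonneg t]
    rw [Real.norm_eq_abs, abs_of_nonneg (by positivity)]
    exact div_le_self (sq_nonneg _) h1

private lemma inv_image' : (fun x : ℝ => x⁻¹) '' (Ioi 1) = Ioo (0:ℝ) 1 := by
  ext t
  constructor
  · rintro ⟨x, hx, rfl⟩
    have hx1 : (1:ℝ) < x := hx
    exact ⟨by positivity, by rw [inv_lt_one_iff₀]; right; exact hx1⟩
  · rintro ⟨h0, h1⟩
    exact ⟨t⁻¹, by rw [mem_Ioi, one_lt_inv_iff₀]; exact ⟨h0, h1⟩, inv_inv t⟩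

private lemma inv_deriv' : ∀ x ∈ Ioi (1:ℝ),
    HasDerivWithinAt (fun x : ℝ => x⁻¹) (-(x^2)⁻¹) (Ioi (1:ℝ)) x := fun x hx =>
  (hasDerivAt_inv (by have : (1:ℝ) < x := hx; positivity)).hasDerivWithinAt

private lemma inv_injOn' : InjOn (fun x : ℝ => x⁻¹) (Ioi (1:ℝ)) := fun a _ b _ h =>
  inv_injective h

private lemma inv_ptwise : ∀ x ∈ Ioi (1:ℝ),
    |(-(x^2)⁻¹)| • (Real.log x⁻¹ ^ 2 / (1 + (x⁻¹)^2)) = Real.log x ^ 2 / (1 + x^2) := by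
  intro x hx
  have hx1 : (1:ℝ) < x := hx
  have hx0 : x ≠ 0 := by positivity
  rw [abs_neg, abs_of_nonneg (by positivity), smul_eq_mul, Real.log_inv, neg_sq]
  have h2 : (1:ℝ) + (x⁻¹)^2 = (1+x^2)/x^2 := by field_simp; ring
  have h1 : (0:ℝ) < 1 + x^2 := by positivity
  rw [h2, div_div_eq_mul_div, eq_div_iff h1.ne']
  field_simp

private lemma E_eq : ∫ t in Ioi (1:ℝ), Real.log t ^ 2 / (1 + t^2)
    = ∫ t in Ioo (0:ℝ) 1, Real.log t ^ 2 / (1 + t^2) := by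
  rw [← inv_image', integral_image_eq_integral_abs_deriv_smul measurableSet_Ioi
    inv_deriv' inv_injOn']
  exact (setIntegral_congr_fun measurableSet_Ioi inv_ptwise).symm

private lemma E_integrable :
    IntegrableOn (fun t : ℝ => Real.log t ^ 2 / (1 + t^2)) (Ioi (1:ℝ)) := by
  have h := K_integrable
  rw [← inv_image', integrableOn_image_iff_integrableOn_abs_deriv_smul measurableSet_Ioi
    inv_deriv' inv_injOn'] at h
  exact h.congr_fun inv_ptwise measurableSet_Ioi

theorem stmt_3 :
    ∫ x in Set.Ioi (0:ℝ), (Real.log x) ^ 2 / (Real.sqrt x * (1 + x)) = π ^ 3 := by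
  have key := integral_comp_rpow_Ioi
    (fun x : ℝ => Real.log x ^ 2 / (Real.sqrt x * (1 + x))) (p := 2) two_ne_zero
  rw [← key]
  have hcongr : ∀ x ∈ Ioi (0:ℝ),
      (|(2:ℝ)| * x ^ ((2:ℝ) - 1)) • (Real.log (x ^ (2:ℝ)) ^ 2 / (Real.sqrt (x ^ (2:ℝ)) * (1 + x ^ (2:ℝ))))
        = 8 * (Real.log x ^ 2 / (1 + x^2)) := by
    intro x hx
    have hx0 : (0:ℝ) < x := hx
    rw [show ((2:ℝ) - 1) = 1 by norm_num, Real.rpow_one, Real.rpow_two, smul_eq_mul,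
      Real.log_pow, Real.sqrt_sq hx0.le]
    have h1 : (0:ℝ) < 1 + x^2 := by positivity
    field_simp
    ring
  rw [setIntegral_congr_fun measurableSet_Ioi hcongr, integral_const_mul]
  have hsplit : ∫ x in Ioi (0:ℝ), Real.log x ^ 2 / (1 + x^2)
      = (∫ x in Ioc (0:ℝ) 1, Real.log x ^ 2 / (1 + x^2))
        + ∫ x in Ioi (1:ℝ), Real.log x ^ 2 / (1 + x^2) := by
    rw [← setIntegral_union (Ioc_disjoint_Ioi le_rfl) measurableSet_Ioi
      ((integrableOn_Ioc_iff_integrableOn_Ioo).mpr K_integrable) E_integrable,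
      Ioc_union_Ioi_eq_Ioi zero_le_one]
  rw [hsplit, integral_Ioc_eq_integral_Ioo, K_val, E_eq, K_val]
  ring
end

section
/- For real s with 0 < s < 1, ∫₀^∞ x^(s-1) cos(x) dx = Γ(s)·cos(πs/2), where the integral is interpreted as an improper Riemann integral lim_{T→∞} ∫₀^T x^(s-1) cos(x) dx. -/
open Real MeasureTheory Filter

open Set

set_option maxHeartbeats 1000000

lemma aux_int_exp {a r : ℝ} (ha : 0 < a) (hr : 0 < r) :
    IntegrableOn (fun t : ℝ => t ^ (a - 1) * Real.exp (-(r * t))) (Ioi 0) := by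
  have hbase : IntegrableOn (fun t : ℝ => t ^ (a - 1) * Real.exp (-t)) (Ioi 0) := by
    have := Real.GammaIntegral_convergent ha
    simpa [mul_comm] using this
  have h2 : IntegrableOn (fun t : ℝ => (r * t) ^ (a - 1) * Real.exp (-(r * t))) (Ioi 0) := by
    have := (integrableOn_Ioi_comp_mul_left_iff
      (fun t : ℝ => t ^ (a - 1) * Real.exp (-t)) 0 hr).2 (by simpa using hbase)
    simpa [mul_zero] using this
  have h3 : IntegrableOn (fun t : ℝ => r ^ (1 - a) * ((r * t) ^ (a - 1) * Real.exp (-(r * t))))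
      (Ioi 0) := h2.const_mul _
  refine h3.congr_fun (fun t ht => ?_) measurableSet_Ioi
  dsimp only
  rw [Real.mul_rpow hr.le (le_of_lt ht)]
  rw [← mul_assoc, ← mul_assoc, ← Real.rpow_add hr]
  norm_num

-- value of ∫ exp(-(c*y)) over Ioi 0

lemma aux_exp_integral {c : ℝ} (hc : 0 < c) :
    ∫ y in Ioi (0:ℝ), Real.exp (-(c * y)) = 1 / c := by
  have := Real.integral_rpow_mul_exp_neg_mul_Ioi one_pos hc
  simp only [sub_self, Real.rpow_zero, one_mul, Real.rpow_one, Real.Gamma_one, mul_one] at this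
  simpa using this

lemma aux_deriv (t x : ℝ) :
    HasDerivAt (fun x : ℝ => Real.exp (-(x * t)) * (Real.sin x - t * Real.cos x) / (1 + t ^ 2))
      (Real.exp (-(x * t)) * Real.cos x) x := by
  have h1 : HasDerivAt (fun x : ℝ => Real.exp (-(x * t))) (-t * Real.exp (-(x * t))) x := by
    have : HasDerivAt (fun x : ℝ => -(x * t)) (-t) x := by
      exact (hasDerivAt_mul_const t).neg
    simpa [mul_comm] using this.exp
  have h2 : HasDerivAt (fun x : ℝ => Real.sin x - t * Real.cos x)
      (Real.cos x + t * Real.sin x) x := by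
    exact ((Real.hasDerivAt_sin x).sub ((Real.hasDerivAt_cos x).const_mul t)).congr_deriv (by ring)
  have h3 := (h1.mul h2).div_const (1 + t ^ 2)
  have ht : (1 : ℝ) + t ^ 2 ≠ 0 := by positivity
  refine h3.congr_deriv ?_
  field_simp
  ring

lemma aux_cos_integral (t T : ℝ) :
    ∫ x in (0:ℝ)..T, Real.exp (-(x * t)) * Real.cos x =
      (Real.exp (-(T * t)) * (Real.sin T - t * Real.cos T) + t) / (1 + t ^ 2) := by
  have h := intervalIntegral.integral_eq_sub_of_hasDerivAt (a := (0:ℝ)) (b := T)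
    (f := fun x : ℝ => Real.exp (-(x * t)) * (Real.sin x - t * Real.cos x) / (1 + t ^ 2))
    (fun x _ => aux_deriv t x) (by apply Continuous.intervalIntegrable; continuity)
  rw [h]
  simp
  ring

-- Laplace representation

lemma aux_laplace {s x : ℝ} (hs1 : s < 1) (hx : 0 < x) :
    ∫ t in Ioi (0:ℝ), t ^ (-s) * Real.exp (-(x * t)) =
      Real.Gamma (1 - s) * x ^ (s - 1) := by
  have h := Real.integral_rpow_mul_exp_neg_mul_Ioi (a := 1 - s) (by linarith) hx
  have e : (1 : ℝ) - s - 1 = -s := by ring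
  rw [e] at h
  rw [h, one_div, ← Real.rpow_neg_one, ← Real.rpow_mul hx.le]
  rw [mul_comm]
  congr 1
  ring

lemma aux_I_integrable {s : ℝ} (hs0 : 0 < s) (hs1 : s < 1) :
    IntegrableOn (fun t : ℝ => t ^ (1 - s) / (1 + t ^ 2)) (Ioi 0) := by
  have hmeas : AEStronglyMeasurable (fun t : ℝ => t ^ (1 - s) / (1 + t ^ 2))
      (volume.restrict (Ioi (0:ℝ))) := by
    apply Measurable.aestronglyMeasurable
    fun_prop
  rw [← Ioc_union_Ioi_eq_Ioi (le_of_lt one_pos), integrableOn_union]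
  constructor
  · have hb : IntegrableOn (fun t : ℝ => t ^ (1 - s)) (Ioc 0 1) := by
      have := (intervalIntegral.intervalIntegrable_rpow' (a := 0) (b := 1) (r := 1 - s)
        (by linarith)).1
      simpa using this
    refine hb.mono' (hmeas.mono_set Ioc_subset_Ioi_self) ?_
    filter_upwards [ae_restrict_mem measurableSet_Ioc] with t ht
    have h1 : (0:ℝ) < t := ht.1
    have h2 : (0:ℝ) < 1 + t ^ 2 := by positivity
    rw [Real.norm_eq_abs, abs_div, abs_of_nonneg (Real.rpow_nonneg h1.le _),
      abs_of_pos h2]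
    rw [div_le_iff₀ h2]
    nlinarith [Real.rpow_nonneg h1.le (1 - s)]
  · have hb : IntegrableOn (fun t : ℝ => t ^ (-1 - s)) (Ioi 1) :=
      integrableOn_Ioi_rpow_of_lt (by linarith) one_pos
    refine hb.mono' (hmeas.mono_set (Ioi_subset_Ioi (le_of_lt one_pos))) ?_
    filter_upwards [ae_restrict_mem measurableSet_Ioi] with t ht
    have h1 : (1:ℝ) < t := ht
    have h0 : (0:ℝ) < t := lt_trans one_pos h1
    have h2 : (0:ℝ) < 1 + t ^ 2 := by positivity
    rw [Real.norm_eq_abs, abs_div, abs_of_nonneg (Real.rpow_nonneg h0.le _), abs_of_pos h2,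
      div_le_iff₀ h2]
    have e : t ^ (-1 - s) * (1 + t ^ 2) = t ^ (1 - s) + t ^ (-1 - s) := by
      rw [mul_add, mul_one, ← Real.rpow_natCast t 2, ← Real.rpow_add h0]
      norm_num
      ring_nf
    rw [e]
    nlinarith [Real.rpow_pos_of_pos h0 (-1 - s)]

lemma aux_exp_integrable {c : ℝ} (hc : 0 < c) :
    IntegrableOn (fun y : ℝ => Real.exp (-(c * y))) (Ioi 0) := by
  have hbase : IntegrableOn (fun t : ℝ => t ^ ((1:ℝ) - 1) * Real.exp (-(c * t))) (Ioi 0) :=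
    aux_int_exp one_pos hc
  refine hbase.congr_fun (fun t ht => ?_) measurableSet_Ioi
  norm_num

lemma aux_I_value {s : ℝ} (hs0 : 0 < s) (hs1 : s < 1) :
    ∫ t in Ioi (0:ℝ), t ^ (1 - s) / (1 + t ^ 2) =
      Real.Gamma (s / 2) * Real.Gamma (1 - s / 2) / 2 := by
  have hIint : IntegrableOn (fun t : ℝ => t ^ (1 - s) / (1 + t ^ 2)) (Ioi 0) :=
    aux_I_integrable hs0 hs1
  have hmeas : AEStronglyMeasurable
      (fun p : ℝ × ℝ => p.1 ^ (1 - s) * Real.exp (-((1 + p.1 ^ 2) * p.2)))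
      ((volume.restrict (Ioi (0:ℝ))).prod (volume.restrict (Ioi (0:ℝ)))) := by
    apply Measurable.aestronglyMeasurable
    fun_prop
  have key1 : ∀ t : ℝ, t ∈ Ioi (0:ℝ) →
      ∫ y in Ioi (0:ℝ), t ^ (1 - s) * Real.exp (-((1 + t ^ 2) * y)) =
        t ^ (1 - s) / (1 + t ^ 2) := by
    intro t ht
    have hc : (0:ℝ) < 1 + t ^ 2 := by positivity
    rw [integral_const_mul, aux_exp_integral hc]
    ring
  have hprod : Integrable
      (Function.uncurry fun t y : ℝ => t ^ (1 - s) * Real.exp (-((1 + t ^ 2) * y)))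
      ((volume.restrict (Ioi (0:ℝ))).prod (volume.restrict (Ioi (0:ℝ)))) := by
    refine (integrable_prod_iff hmeas).2 ⟨?_, ?_⟩
    · filter_upwards [ae_restrict_mem measurableSet_Ioi] with t ht
      have hc : (0:ℝ) < 1 + t ^ 2 := by positivity
      exact ((aux_exp_integrable hc).const_mul _)
    · have : ∀ᵐ t ∂(volume.restrict (Ioi (0:ℝ))),
          (∫ y in Ioi (0:ℝ), ‖t ^ (1 - s) * Real.exp (-((1 + t ^ 2) * y))‖) =
            t ^ (1 - s) / (1 + t ^ 2) := by
        filter_upwards [ae_restrict_mem measurableSet_Ioi] with t ht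
        have ht' : (0:ℝ) < t := ht
        rw [← key1 t ht']
        refine integral_congr_ae ?_
        filter_upwards [ae_restrict_mem measurableSet_Ioi] with y hy
        rw [Real.norm_eq_abs, abs_of_nonneg]
        positivity
      exact (integrable_congr this).2 hIint
  have swap : ∫ t in Ioi (0:ℝ), ∫ y in Ioi (0:ℝ), t ^ (1 - s) * Real.exp (-((1 + t ^ 2) * y)) =
      ∫ y in Ioi (0:ℝ), ∫ t in Ioi (0:ℝ), t ^ (1 - s) * Real.exp (-((1 + t ^ 2) * y)) :=
    integral_integral_swap hprod
  have key2 : ∀ y : ℝ, y ∈ Ioi (0:ℝ) →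
      ∫ t in Ioi (0:ℝ), t ^ (1 - s) * Real.exp (-((1 + t ^ 2) * y)) =
        Real.exp (-y) * (y ^ (-((1 - s) + 1) / 2) * (1 / 2) * Real.Gamma (((1 - s) + 1) / 2)) := by
    intro y hy
    have hy' : (0:ℝ) < y := hy
    have e1 : ∀ t : ℝ, t ∈ Ioi (0:ℝ) →
        t ^ (1 - s) * Real.exp (-((1 + t ^ 2) * y)) =
          Real.exp (-y) * (t ^ (1 - s) * Real.exp (-y * t ^ (2:ℝ))) := by
      intro t ht
      rw [Real.rpow_two]
      rw [show Real.exp (-y) * (t ^ (1 - s) * Real.exp (-y * t ^ 2)) =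
          t ^ (1 - s) * (Real.exp (-y) * Real.exp (-y * t ^ 2)) from by ring, ← Real.exp_add]
      congr 1
      ring
    rw [setIntegral_congr_fun measurableSet_Ioi e1, integral_const_mul,
      integral_rpow_mul_exp_neg_mul_rpow two_pos (by linarith) hy']
  rw [← setIntegral_congr_fun measurableSet_Ioi key1, swap,
    setIntegral_congr_fun measurableSet_Ioi key2]
  have e2 : -((1 - s) + 1) / 2 = s / 2 - 1 := by ring
  have e3 : ((1 - s) + 1) / 2 = 1 - s / 2 := by ring
  rw [e2, e3]
  have : ∫ y in Ioi (0:ℝ), Real.exp (-y) * (y ^ (s / 2 - 1) * (1 / 2) * Real.Gamma (1 - s / 2))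
      = (1 / 2) * Real.Gamma (1 - s / 2) * ∫ y in Ioi (0:ℝ), Real.exp (-y) * y ^ (s / 2 - 1) := by
    rw [← integral_const_mul]
    refine setIntegral_congr_fun measurableSet_Ioi (fun y hy => ?_)
    ring
  rw [this, ← Real.Gamma_eq_integral (by linarith : 0 < s / 2)]
  ring

lemma aux_int_exp' {s r : ℝ} (hs1 : s < 1) (hr : 0 < r) :
    IntegrableOn (fun t : ℝ => t ^ (-s) * Real.exp (-(r * t))) (Ioi 0) := by
  have := aux_int_exp (show (0:ℝ) < 1 - s by linarith) hr
  simpa [show (1:ℝ) - s - 1 = -s by ring] using this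

lemma aux_main {s T : ℝ} (hs0 : 0 < s) (hs1 : s < 1) (hT : 0 < T) :
    ∫ x in (0:ℝ)..T, x ^ (s - 1) * Real.cos x =
      (Real.Gamma (1 - s))⁻¹ * ∫ t in Ioi (0:ℝ), t ^ (-s) *
        ((Real.exp (-(T * t)) * (Real.sin T - t * Real.cos T) + t) / (1 + t ^ 2)) := by
  have hg : 0 < Real.Gamma (1 - s) := Real.Gamma_pos_of_pos (by linarith)
  have hmeas : AEStronglyMeasurable
      (fun p : ℝ × ℝ => p.2 ^ (-s) * Real.exp (-(p.1 * p.2)) * Real.cos p.1)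
      ((volume.restrict (Ioc (0:ℝ) T)).prod (volume.restrict (Ioi (0:ℝ)))) := by
    apply Measurable.aestronglyMeasurable
    fun_prop
  have hxrpow : IntegrableOn (fun x : ℝ => x ^ (s - 1)) (Ioc 0 T) := by
    have := (intervalIntegral.intervalIntegrable_rpow' (a := 0) (b := T) (r := s - 1)
      (by linarith)).1
    simpa [uIoc_of_le hT.le] using this
  have hprod : Integrable
      (Function.uncurry fun x t : ℝ => t ^ (-s) * Real.exp (-(x * t)) * Real.cos x)
      ((volume.restrict (Ioc (0:ℝ) T)).prod (volume.restrict (Ioi (0:ℝ)))) := by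
    refine (integrable_prod_iff hmeas).2 ⟨?_, ?_⟩
    · filter_upwards [ae_restrict_mem measurableSet_Ioc] with x hx
      exact (aux_int_exp' hs1 hx.1).mul_const _
    · have hcong : ∀ᵐ x ∂(volume.restrict (Ioc (0:ℝ) T)),
          (∫ t in Ioi (0:ℝ), ‖t ^ (-s) * Real.exp (-(x * t)) * Real.cos x‖) =
            |Real.cos x| * (Real.Gamma (1 - s) * x ^ (s - 1)) := by
        filter_upwards [ae_restrict_mem measurableSet_Ioc] with x hx
        rw [← aux_laplace hs1 hx.1, ← integral_const_mul]
        refine setIntegral_congr_fun measurableSet_Ioi (fun t ht => ?_)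
        have ht' : (0:ℝ) < t := ht
        rw [Real.norm_eq_abs, abs_mul, abs_mul,
          abs_of_nonneg (Real.rpow_nonneg ht'.le _), abs_of_nonneg (Real.exp_nonneg _)]
        ring
      refine (integrable_congr hcong).2 ?_
      refine Integrable.bdd_mul (c := 1) ((hxrpow.const_mul _)) ?_ (Eventually.of_forall fun x => ?_)
      · apply Measurable.aestronglyMeasurable; fun_prop
      · rw [Real.norm_eq_abs, abs_abs]
        exact Real.abs_cos_le_one x
  calc ∫ x in (0:ℝ)..T, x ^ (s - 1) * Real.cos x
      = ∫ x in Ioc (0:ℝ) T, x ^ (s - 1) * Real.cos x := by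
        rw [intervalIntegral.integral_of_le hT.le]
    _ = ∫ x in Ioc (0:ℝ) T, (Real.Gamma (1 - s))⁻¹ *
          ∫ t in Ioi (0:ℝ), t ^ (-s) * Real.exp (-(x * t)) * Real.cos x := by
        refine setIntegral_congr_fun measurableSet_Ioc (fun x hx => ?_)
        have : ∫ t in Ioi (0:ℝ), t ^ (-s) * Real.exp (-(x * t)) * Real.cos x =
            (Real.Gamma (1 - s) * x ^ (s - 1)) * Real.cos x := by
          rw [← aux_laplace hs1 hx.1, ← integral_mul_const]
        rw [this]
        field_simp
    _ = (Real.Gamma (1 - s))⁻¹ * ∫ x in Ioc (0:ℝ) T,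
          ∫ t in Ioi (0:ℝ), t ^ (-s) * Real.exp (-(x * t)) * Real.cos x := by
        rw [integral_const_mul]
    _ = (Real.Gamma (1 - s))⁻¹ * ∫ t in Ioi (0:ℝ),
          ∫ x in Ioc (0:ℝ) T, t ^ (-s) * Real.exp (-(x * t)) * Real.cos x := by
        rw [integral_integral_swap hprod]
    _ = (Real.Gamma (1 - s))⁻¹ * ∫ t in Ioi (0:ℝ), t ^ (-s) *
          ((Real.exp (-(T * t)) * (Real.sin T - t * Real.cos T) + t) / (1 + t ^ 2)) := by
        congr 1
        refine setIntegral_congr_fun measurableSet_Ioi (fun t ht => ?_)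
        rw [← aux_cos_integral t T, intervalIntegral.integral_of_le hT.le, ← integral_const_mul]
        refine setIntegral_congr_fun measurableSet_Ioc (fun x hx => ?_)
        ring

lemma aux_bound {s T t : ℝ} (ht : 0 < t) :
    ‖t ^ (-s) * (Real.exp (-(T * t)) * (Real.sin T - t * Real.cos T) / (1 + t ^ 2))‖ ≤
      2 * (t ^ (-s) * Real.exp (-(T * t))) := by
  have h2 : (0:ℝ) < 1 + t ^ 2 := by positivity
  have hA : (0:ℝ) ≤ t ^ (-s) := Real.rpow_nonneg ht.le _
  have hE : (0:ℝ) ≤ Real.exp (-(T * t)) := Real.exp_nonneg _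
  rw [Real.norm_eq_abs, abs_mul, abs_div, abs_mul, abs_of_nonneg hA, abs_of_nonneg hE,
    abs_of_pos h2]
  have hsc : |Real.sin T - t * Real.cos T| ≤ 1 + t := by
    calc |Real.sin T - t * Real.cos T| ≤ |Real.sin T| + |t * Real.cos T| := abs_sub _ _
      _ ≤ 1 + t := by
        rw [abs_mul, abs_of_pos ht]
        have := Real.abs_sin_le_one T
        have := Real.abs_cos_le_one T
        nlinarith
  have key : |Real.sin T - t * Real.cos T| / (1 + t ^ 2) ≤ 2 := by
    rw [div_le_iff₀ h2]
    nlinarith [abs_nonneg (Real.sin T - t * Real.cos T)]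
  calc t ^ (-s) * (Real.exp (-(T * t)) * |Real.sin T - t * Real.cos T| / (1 + t ^ 2)) =
      (t ^ (-s) * Real.exp (-(T * t))) * (|Real.sin T - t * Real.cos T| / (1 + t ^ 2)) := by
        ring
    _ ≤ (t ^ (-s) * Real.exp (-(T * t))) * 2 := by
        exact mul_le_mul_of_nonneg_left key (by positivity)
    _ = 2 * (t ^ (-s) * Real.exp (-(T * t))) := by ring

theorem stmt_6 (s : ℝ) (hs0 : 0 < s) (hs1 : s < 1) :
    Tendsto (fun T : ℝ => ∫ x in (0:ℝ)..T, x ^ (s - 1) * Real.cos x) atTop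
      (nhds (Real.Gamma s * Real.cos (π * s / 2))) := by
  have hg : 0 < Real.Gamma (1 - s) := Real.Gamma_pos_of_pos (by linarith)
  -- the limit integral I
  set I : ℝ := ∫ t in Ioi (0:ℝ), t ^ (-s) * (t / (1 + t ^ 2)) with hI
  have hf1_eq : ∀ t : ℝ, t ∈ Ioi (0:ℝ) →
      t ^ (-s) * (t / (1 + t ^ 2)) = t ^ (1 - s) / (1 + t ^ 2) := by
    intro t ht
    have ht' : (0:ℝ) < t := ht
    rw [show t ^ (1 - s) = t ^ (-s) * t by
      rw [show (1:ℝ) - s = -s + 1 by ring, Real.rpow_add ht', Real.rpow_one]]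
    ring
  have hf1int : IntegrableOn (fun t : ℝ => t ^ (-s) * (t / (1 + t ^ 2))) (Ioi 0) :=
    (aux_I_integrable hs0 hs1).congr_fun (fun t ht => (hf1_eq t ht).symm) measurableSet_Ioi
  have hIval : I = Real.Gamma (s / 2) * Real.Gamma (1 - s / 2) / 2 := by
    rw [hI, setIntegral_congr_fun measurableSet_Ioi hf1_eq, aux_I_value hs0 hs1]
  -- remainder J
  set J : ℝ → ℝ := fun T => ∫ t in Ioi (0:ℝ),
    t ^ (-s) * (Real.exp (-(T * t)) * (Real.sin T - t * Real.cos T) / (1 + t ^ 2)) with hJ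
  have hf2int : ∀ T : ℝ, 0 < T → IntegrableOn
      (fun t : ℝ => t ^ (-s) * (Real.exp (-(T * t)) * (Real.sin T - t * Real.cos T) / (1 + t ^ 2)))
      (Ioi 0) := by
    intro T hT
    refine ((aux_int_exp' hs1 hT).const_mul 2).mono' ?_ ?_
    · apply Measurable.aestronglyMeasurable; fun_prop
    · filter_upwards [ae_restrict_mem measurableSet_Ioi] with t ht
      exact aux_bound ht
  have hJbound : ∀ T : ℝ, 0 < T → ‖J T‖ ≤ 2 * (Real.Gamma (1 - s) * T ^ (s - 1)) := by
    intro T hT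
    have h1 : ‖J T‖ ≤ ∫ t in Ioi (0:ℝ), 2 * (t ^ (-s) * Real.exp (-(T * t))) := by
      refine norm_integral_le_of_norm_le ((aux_int_exp' hs1 hT).const_mul 2) ?_
      filter_upwards [ae_restrict_mem measurableSet_Ioi] with t ht
      exact aux_bound ht
    rw [integral_const_mul, aux_laplace hs1 hT] at h1
    exact h1
  have hJ0 : Tendsto J atTop (nhds 0) := by
    apply squeeze_zero_norm' (a := fun T => 2 * (Real.Gamma (1 - s) * T ^ (s - 1)))
    · filter_upwards [eventually_gt_atTop 0] with T hT
      exact hJbound T hT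
    · have : Tendsto (fun T : ℝ => T ^ (s - 1)) atTop (nhds 0) := by
        have := tendsto_rpow_neg_atTop (y := 1 - s) (by linarith)
        simpa [show -(1 - s) = s - 1 by ring] using this
      have h2 := (this.const_mul (2 * Real.Gamma (1 - s)))
      simpa [mul_assoc] using h2
  -- decomposition for T > 0
  have hdecomp : ∀ T : ℝ, 0 < T →
      (∫ x in (0:ℝ)..T, x ^ (s - 1) * Real.cos x) =
        (Real.Gamma (1 - s))⁻¹ * (J T + I) := by
    intro T hT
    rw [aux_main hs0 hs1 hT]
    congr 1
    rw [hJ, hI, ← integral_add (hf2int T hT) hf1int]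
    refine setIntegral_congr_fun measurableSet_Ioi (fun t ht => ?_)
    ring
  -- assemble
  have hlim : Tendsto (fun T : ℝ => (Real.Gamma (1 - s))⁻¹ * (J T + I)) atTop
      (nhds ((Real.Gamma (1 - s))⁻¹ * (0 + I))) :=
    ((hJ0.add tendsto_const_nhds).const_mul _)
  have heq : (Real.Gamma (1 - s))⁻¹ * (0 + I) = Real.Gamma s * Real.cos (π * s / 2) := by
    rw [zero_add, hIval]
    have r1 := Real.Gamma_mul_Gamma_one_sub (s / 2)
    have r2 := Real.Gamma_mul_Gamma_one_sub s
    have hsin2 : Real.sin (π * s) = 2 * Real.sin (π * (s / 2)) * Real.cos (π * (s / 2)) := by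
      rw [show π * s = 2 * (π * (s / 2)) by ring, Real.sin_two_mul]
    have hs1' : 0 < Real.sin (π * (s / 2)) := by
      apply Real.sin_pos_of_pos_of_lt_pi
      · positivity
      · nlinarith [Real.pi_pos]
    have hcos : 0 < Real.cos (π * (s / 2)) := by
      apply Real.cos_pos_of_mem_Ioo
      constructor
      · nlinarith [Real.pi_pos]
      · nlinarith [Real.pi_pos]
    rw [show π * s / 2 = π * (s / 2) by ring]
    rw [hsin2] at r2
    have hπ : Real.Gamma s * Real.Gamma (1 - s) *
        (2 * Real.sin (π * (s / 2)) * Real.cos (π * (s / 2))) = π :=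
      (eq_div_iff (by positivity)).1 r2
    rw [show π * (s / 2) = π * s / 2 by ring] at r1 hπ hs1' hcos
    rw [r1]
    rw [show π * (s / 2) = π * s / 2 by ring, inv_mul_eq_iff_eq_mul₀ hg.ne', div_div, div_eq_iff (mul_pos hs1' two_pos).ne']
    linear_combination -hπ
  rw [← heq]
  refine hlim.congr' ?_
  filter_upwards [eventually_gt_atTop 0] with T hT
  exact (hdecomp T hT).symm
end
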